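/- For any positive reals λ₁,…,λ_d, any q ∈ {1,…,N} and any interior multi-index 𝐣 ∈ {0,…,J−2}^d (so that every center coordinate lies in (0,1)), one has a_q^𝐣 = h · (λ₁ j₁ + ⋯ + λ_d j_d) + ( (h + δ^μ)/2 − φ((1−q)δ) ) · (λ₁ + ⋯ + λ_d). -/
import Mathlib


noncomputable section

/-- The smeared-out Heaviside shape function `S(z) = z - sin(2πz)/(2π)`. -/
def Sfun (z : ℝ) : ℝ := z - Real.sin (2 * Real.pi * z) / (2 * Real.pi)

/-- The quintic shape function `P(z) = z³(6z² - 15z + 10)`. -/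
def Pfun (z : ℝ) : ℝ := z ^ 3 * (6 * z ^ 2 - 15 * z + 10)

/-- The inner function `ψ_q(x) = φ(x + (1-q)δ) - φ((1-q)δ)`. -/
def psi (φ : ℝ → ℝ) (δ : ℝ) (q : ℕ) (x : ℝ) : ℝ :=
  φ (x + (1 - (q : ℝ)) * δ) - φ ((1 - (q : ℝ)) * δ)

/-- The hypercube center coordinate `c_q^j`, with the boundary conventions
`c_q^{-1} = 0` and `c_q^{J-1} = 1`. -/
def center (h δ : ℝ) (J : ℕ) (q : ℕ) (j : ℤ) : ℝ :=
  if j = -1 then 0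
  else if j = (J : ℤ) - 1 then 1
  else (j : ℝ) * h + (h + δ) / 2 + ((q : ℝ) - 1) * δ

/-- The mapped hypercube center `a_q^jv = Ψ_q(𝐜_q^jv) = Σ_p λ_p ψ_q(c_q^{j_p})`. -/
def amap (φ : ℝ → ℝ) (h δ : ℝ) (J : ℕ) {d : ℕ} (lam : Fin d → ℝ)
    (q : ℕ) (jv : Fin d → ℤ) : ℝ :=
  ∑ p, lam p * psi φ δ q (center h δ J q (jv p))

/-- explicit formula for a_q^jv for interior multi-indices. -/
theorem amap_interior_formula
    (N : ℕ) (hN : 2 ≤ N) (δ : ℝ) (hδ : 0 < δ) (μ : ℝ) (hμ : 0 < μ)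
    (h : ℝ) (hh : h = (N : ℝ) * δ)
    (φ : ℝ → ℝ)
    (hφS : ∀ j : ℤ, ∀ t ∈ Set.Icc ((j : ℝ) * h) ((j : ℝ) * h + δ),
      φ t = (j : ℝ) * h + δ ^ μ * Sfun ((t - (j : ℝ) * h) / δ))
    (hφP : ∀ j : ℤ, ∀ t ∈ Set.Icc ((j : ℝ) * h + δ) (((j : ℝ) + 1) * h),
      φ t = (j : ℝ) * h + δ ^ μ + (h - δ ^ μ) * Pfun ((t - (j : ℝ) * h - δ) / (h - δ)))
    (J : ℕ) (hJ : 0 < J) (hJh : (J : ℝ) * h = 1)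
    (d : ℕ) (hd : 2 ≤ d) (lam : Fin d → ℝ) (hlam : ∀ p, 0 < lam p)
    :
    ∀ q : ℕ, 1 ≤ q → q ≤ N →
      ∀ jv : Fin d → ℤ, (∀ p, 0 ≤ jv p ∧ jv p ≤ (J : ℤ) - 2) →
        amap φ h δ J lam q jv =
          h * (∑ p, lam p * (jv p : ℝ)) +
          ((h + δ ^ μ) / 2 - φ ((1 - (q : ℝ)) * δ)) * ∑ p, lam p := by
  
  intro q hq1 hq2 jv hjv
  have hNδ : (2:ℝ) * δ ≤ h := by
    rw [hh]; have : (2:ℝ) ≤ (N:ℝ) := by exact_mod_cast hN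
    nlinarith
  have hδh : δ < h := by linarith
  have hne : h - δ ≠ 0 := by linarith
  have key : ∀ p : Fin d, lam p * psi φ δ q (center h δ J q (jv p)) =
      lam p * ((jv p : ℝ) * h + (h + δ ^ μ) / 2 - φ ((1 - (q : ℝ)) * δ)) := by
    intro p
    obtain ⟨hj0, hj2⟩ := hjv p
    have hc1 : jv p ≠ -1 := by omega
    have hc2 : jv p ≠ (J : ℤ) - 1 := by omega
    have hcen : center h δ J q (jv p) = (jv p : ℝ) * h + (h + δ) / 2 + ((q : ℝ) - 1) * δ := by
      simp [center, hc1, hc2]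
    have harg : center h δ J q (jv p) + (1 - (q : ℝ)) * δ = (jv p : ℝ) * h + (h + δ) / 2 := by
      rw [hcen]; ring
    have hmem : (jv p : ℝ) * h + (h + δ) / 2 ∈
        Set.Icc ((jv p : ℝ) * h + δ) (((jv p : ℝ) + 1) * h) := by
      constructor
      · linarith
      · nlinarith
    have hφval := hφP (jv p) _ hmem
    have hargP : ((jv p : ℝ) * h + (h + δ) / 2 - (jv p : ℝ) * h - δ) / (h - δ) = 1 / 2 := by
      field_simp
      ring
    rw [hargP] at hφval
    have hP : Pfun (1/2) = 1/2 := by norm_num [Pfun]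
    rw [hP] at hφval
    rw [psi, harg, hφval]
    ring
  rw [amap, Finset.sum_congr rfl fun p _ => key p]
  rw [Finset.mul_sum, Finset.mul_sum, ← Finset.sum_add_distrib]
  apply Finset.sum_congr rfl
  intro p _
  ring
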